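/- For real random variables X with cdf F and quantile function F^{-1}, if Z = F(X^-) + U·(F(X) - F(X^-)) where U ~ Uniform[0,1] is independent of X and F(X^-) denotes the left limit of F at X, then Z is uniformly distributed on [0,1]. -/

import Mathlib

open MeasureTheory Set Filter Topology

private lemma null_of_inter_Iic (μ : Measure ℝ) {s : Set ℝ}
    (h : ∀ x ∈ s, μ (s ∩ Iic x) = 0) : μ s = 0 := by
  rcases s.eq_empty_or_nonempty with rfl | hne
  · simp
  by_cases hb : BddAbove s
  · by_cases hbs : sSup s ∈ s
    · refine measure_mono_null ?_ (h _ hbs)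
      exact fun y hy => ⟨hy, le_csSup hb hy⟩
    · have hx : ∀ n : ℕ, ∃ x ∈ s, sSup s - 1/(n+1) < x := by
        intro n
        by_contra h'
        push_neg at h'
        have h1 : sSup s ≤ sSup s - 1/(n+1) := csSup_le hne h'
        have hpos : (0:ℝ) < 1/(n+1) := by positivity
        linarith
      choose x hxs hxlt using hx
      refine measure_mono_null (fun y hy => ?_) (measure_iUnion_null fun n => h (x n) (hxs n))
      have hyb : y < sSup s := lt_of_le_of_ne (le_csSup hb hy) (by rintro rfl; exact hbs hy)
      obtain ⟨n, hn⟩ := exists_nat_one_div_lt (sub_pos.2 hyb)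
      exact mem_iUnion.2 ⟨n, ⟨hy, by simp only [mem_Iic]; have := hxlt n; linarith⟩⟩
  · have hx : ∀ n : ℕ, ∃ x ∈ s, (n:ℝ) ≤ x := by
      intro n
      by_contra h'
      push_neg at h'
      exact hb ⟨n, fun y hy => (h' y hy).le⟩
    choose x hxs hxle using hx
    refine measure_mono_null (fun y hy => ?_) (measure_iUnion_null fun n => h (x n) (hxs n))
    obtain ⟨n, hn⟩ := exists_nat_ge y
    exact mem_iUnion.2 ⟨n, ⟨hy, by simp only [mem_Iic]; exact hn.trans (hxle n)⟩⟩

private lemma nu_Iic (c : ℝ) :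
    (volume.restrict (Icc (0:ℝ) 1)) (Iic c) = ENNReal.ofReal (min c 1) := by
  rw [Measure.restrict_apply measurableSet_Iic]
  have h : Iic c ∩ Icc (0:ℝ) 1 = Icc 0 (min c 1) := by
    ext y
    simp only [mem_inter_iff, mem_Iic, mem_Icc, le_min_iff]
    tauto
  rw [h, Real.volume_Icc]
  norm_num

private lemma nu_prob : IsProbabilityMeasure (volume.restrict (Icc (0:ℝ) 1)) := by
  constructor
  rw [Measure.restrict_apply_univ, Real.volume_Icc]
  norm_num

private lemma nu_one {s : Set ℝ} (hs : Icc (0:ℝ) 1 ⊆ s) :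
    (volume.restrict (Icc (0:ℝ) 1)) s = 1 := by
  haveI := nu_prob
  refine le_antisymm prob_le_one ?_
  have h1 : (volume.restrict (Icc (0:ℝ) 1)) (Icc (0:ℝ) 1) = 1 := by
    rw [Measure.restrict_apply_self, Real.volume_Icc]; norm_num
  rw [← h1]
  exact measure_mono hs

private lemma slice_eq {a b t : ℝ} (h : a < b) :
    {u : ℝ | a + u * (b - a) ≤ t} = Iic ((t - a)/(b - a)) := by
  ext u
  simp only [mem_setOf_eq, mem_Iic, le_div_iff₀ (sub_pos.2 h)]
  constructor <;> intro <;> linarith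

private lemma measurable_g (μ : Measure ℝ) [IsFiniteMeasure μ] :
    Measurable fun p : ℝ × ℝ =>
      (μ (Iio p.1)).toReal + p.2 * ((μ (Iic p.1)).toReal - (μ (Iio p.1)).toReal) := by
  have hFm : Measurable fun x : ℝ => (μ (Iic x)).toReal :=
    Monotone.measurable fun a b hab =>
      ENNReal.toReal_mono (measure_ne_top μ _) (measure_mono (Iic_subset_Iic.2 hab))
  have hGm : Measurable fun x : ℝ => (μ (Iio x)).toReal :=
    Monotone.measurable fun a b hab =>
      ENNReal.toReal_mono (measure_ne_top μ _) (measure_mono (Iio_subset_Iio hab))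
  exact (hGm.comp measurable_fst).add
    (measurable_snd.mul ((hFm.comp measurable_fst).sub (hGm.comp measurable_fst)))

private lemma distrib_transform (μ : Measure ℝ) [IsProbabilityMeasure μ] :
    Measure.map (fun p : ℝ × ℝ =>
        (μ (Iio p.1)).toReal + p.2 * ((μ (Iic p.1)).toReal - (μ (Iio p.1)).toReal))
      (μ.prod (volume.restrict (Icc (0:ℝ) 1)))
      = volume.restrict (Icc (0:ℝ) 1) := by
  haveI := nu_prob
  set ν : Measure ℝ := volume.restrict (Icc (0:ℝ) 1) with hνdef
  set g : ℝ × ℝ → ℝ := fun p =>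
    (μ (Iio p.1)).toReal + p.2 * ((μ (Iic p.1)).toReal - (μ (Iio p.1)).toReal) with hgdef
  have hgm : Measurable g := measurable_g μ
  haveI : IsProbabilityMeasure (Measure.map g (μ.prod ν)) :=
    Measure.isProbabilityMeasure_map hgm.aemeasurable
  refine Measure.ext_of_Iic _ _ fun t => ?_
  rw [Measure.map_apply hgm measurableSet_Iic,
    Measure.prod_apply (hgm measurableSet_Iic), nu_Iic]
  have hslice : ∀ x : ℝ, (Prod.mk x ⁻¹' (g ⁻¹' Iic t))
      = {u : ℝ | (μ (Iio x)).toReal + u * ((μ (Iic x)).toReal - (μ (Iio x)).toReal) ≤ t} :=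
    fun x => rfl
  -- basic facts about a = G x, b = F x
  have hab : ∀ x : ℝ, (μ (Iio x)).toReal ≤ (μ (Iic x)).toReal := fun x =>
    ENNReal.toReal_mono (measure_ne_top μ _) (measure_mono Iio_subset_Iic_self)
  have ha0 : ∀ x : ℝ, 0 ≤ (μ (Iio x)).toReal := fun x => ENNReal.toReal_nonneg
  have hb1 : ∀ x : ℝ, (μ (Iic x)).toReal ≤ 1 := fun x => by
    have := ENNReal.toReal_mono (measure_ne_top μ univ) (measure_mono (subset_univ (Iic x)))
    simpa [measure_univ] using this
  rcases le_or_gt t 0 with ht0 | ht0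
  · -- t ≤ 0 : both sides are 0
    have hmin : min t 1 ≤ 0 := le_trans (min_le_left _ _) ht0
    rw [ENNReal.ofReal_eq_zero.2 hmin]
    have hm : Measurable fun x : ℝ => μ (Iic x) :=
      Monotone.measurable fun a b hab' => measure_mono (Iic_subset_Iic.2 hab')
    have hNm : MeasurableSet {x : ℝ | μ (Iic x) = 0} := hm (measurableSet_singleton 0)
    have hN : μ {x : ℝ | μ (Iic x) = 0} = 0 := by
      apply null_of_inter_Iic
      intro x hx
      exact measure_mono_null inter_subset_right hx
    refine le_antisymm ?_ zero_le
    have hle : ∀ x : ℝ, ν (Prod.mk x ⁻¹' (g ⁻¹' Iic t))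
        ≤ {x : ℝ | μ (Iic x) = 0}.indicator (fun _ => 1) x := by
      intro x
      by_cases hx : μ (Iic x) = 0
      · have hmem : x ∈ {x : ℝ | μ (Iic x) = 0} := hx
        rw [indicator_of_mem hmem]
        exact prob_le_one
      · have hmem : x ∉ {x : ℝ | μ (Iic x) = 0} := hx
        rw [indicator_of_notMem hmem]
        rw [hslice x]
        have hbpos : 0 < (μ (Iic x)).toReal := ENNReal.toReal_pos hx (measure_ne_top μ _)
        rcases eq_or_lt_of_le (hab x) with heq | hlt
        · have hempty : {u : ℝ | (μ (Iio x)).toReal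
              + u * ((μ (Iic x)).toReal - (μ (Iio x)).toReal) ≤ t} = (∅ : Set ℝ) := by
            ext u
            simp only [mem_setOf_eq, mem_empty_iff_false, iff_false, not_le]
            have hz : u * ((μ (Iic x)).toReal - (μ (Iio x)).toReal) = 0 := by
              rw [← heq]; ring
            rw [hz]
            linarith
          rw [hempty, measure_empty]
        · rw [slice_eq hlt, nu_Iic]
          have hc : (t - (μ (Iio x)).toReal) / ((μ (Iic x)).toReal - (μ (Iio x)).toReal) ≤ 0 :=
            div_nonpos_of_nonpos_of_nonneg (by linarith [ha0 x]) (by linarith)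
          rw [min_eq_left (hc.trans zero_le_one)]
          simp [ENNReal.ofReal_eq_zero.2 hc]
    calc ∫⁻ x, ν (Prod.mk x ⁻¹' (g ⁻¹' Iic t)) ∂μ
        ≤ ∫⁻ x, {x : ℝ | μ (Iic x) = 0}.indicator (fun _ => 1) x ∂μ := lintegral_mono hle
      _ = 0 := by rw [lintegral_indicator hNm]; simp [hN]
  rcases le_or_gt 1 t with ht1 | ht1
  · -- 1 ≤ t : both sides are 1
    have hone : ∀ x : ℝ, ν (Prod.mk x ⁻¹' (g ⁻¹' Iic t)) = 1 := by
      intro x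
      rw [hslice x]
      apply nu_one
      intro u hu
      simp only [mem_setOf_eq]
      have h1 := hu.1
      have h2 := hu.2
      nlinarith [hab x, hb1 x, ha0 x]
    simp only [hone]
    rw [lintegral_one, measure_univ, min_eq_right ht1]
    norm_num
  -- main case : 0 < t < 1
  set S : Set ℝ := {x | ENNReal.ofReal t ≤ μ (Iic x)} with hSdef
  have htoReal : (ENNReal.ofReal t).toReal = t := ENNReal.toReal_ofReal ht0.le
  have hSne : S.Nonempty := by
    have h1 : ENNReal.ofReal t < μ univ := by
      rw [measure_univ, ← ENNReal.ofReal_one]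
      exact ENNReal.ofReal_lt_ofReal_iff_of_nonneg ht0.le |>.2 ht1
    obtain ⟨x, hx⟩ := ((tendsto_measure_Iic_atTop μ).eventually_const_lt h1).exists
    exact ⟨x, hx.le⟩
  have hSbdd : BddBelow S := by
    have h2 : Tendsto (fun n : ℕ => μ (Iic (-(n:ℝ)))) atTop (𝓝 0) := by
      have h3 : ⋂ n : ℕ, Iic (-(n:ℝ)) = ∅ := by
        ext y
        simp only [mem_iInter, mem_Iic, mem_empty_iff_false, iff_false, not_forall, not_le]
        obtain ⟨n, hn⟩ := exists_nat_gt (-y)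
        exact ⟨n, by linarith⟩
      have h4 := tendsto_measure_iInter_atTop (μ := μ)
        (s := fun n : ℕ => Iic (-(n:ℝ)))
        (fun n : ℕ => measurableSet_Iic.nullMeasurableSet)
        (fun m n hmn => Iic_subset_Iic.2 (by exact_mod_cast neg_le_neg (Nat.cast_le.2 hmn)))
        ⟨0, measure_ne_top μ _⟩
      rwa [h3, measure_empty] at h4
    obtain ⟨n, hn⟩ := (h2.eventually_lt_const (ENNReal.ofReal_pos.2 ht0)).exists
    refine ⟨-(n:ℝ), fun s hs => ?_⟩
    by_contra h'
    push_neg at h'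
    exact absurd (hs.trans (measure_mono (Iic_subset_Iic.2 h'.le))) (not_le.2 hn)
  set q : ℝ := sInf S with hqdef
  have hqF : ENNReal.ofReal t ≤ μ (Iic q) := by
    have hIicq : Iic q = ⋂ n : ℕ, Iic (q + 1/(n+1)) := by
      ext y
      simp only [mem_Iic, mem_iInter]
      constructor
      · intro h n
        have : (0:ℝ) < 1/(n+1) := by positivity
        linarith
      · intro h
        by_contra hy
        push_neg at hy
        obtain ⟨n, hn⟩ := exists_nat_one_div_lt (sub_pos.2 hy)
        exact absurd (h n) (by push_neg; linarith)
    rw [hIicq]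
    have htd := tendsto_measure_iInter_atTop (μ := μ)
      (s := fun n : ℕ => Iic (q + 1/(n+1)))
      (fun n : ℕ => measurableSet_Iic.nullMeasurableSet)
      (fun m n hmn => Iic_subset_Iic.2 (by
        have h5 : (1:ℝ)/(n+1) ≤ 1/(m+1) := by
          apply one_div_le_one_div_of_le (by positivity)
          exact_mod_cast add_le_add_left (Nat.cast_le.2 hmn) 1
        linarith))
      ⟨0, measure_ne_top μ _⟩
    refine ge_of_tendsto htd (Eventually.of_forall fun n => ?_)
    obtain ⟨s, hsS, hsle⟩ : ∃ s ∈ S, s ≤ q + 1/(n+1) := by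
      by_contra h'
      push_neg at h'
      have h6 : q + 1/(n+1) ≤ q := le_csInf hSne fun s hs => (h' s hs).le
      have : (0:ℝ) < 1/(n+1) := by positivity
      linarith
    exact le_trans hsS (measure_mono (Iic_subset_Iic.2 hsle))
  have hqG : μ (Iio q) ≤ ENNReal.ofReal t := by
    have hIioq : Iio q = ⋃ n : ℕ, Iic (q - 1/(n+1)) := by
      ext y
      simp only [mem_Iio, mem_iUnion, mem_Iic]
      constructor
      · intro h
        obtain ⟨n, hn⟩ := exists_nat_one_div_lt (sub_pos.2 h)
        exact ⟨n, by linarith⟩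
      · rintro ⟨n, hn⟩
        have : (0:ℝ) < 1/(n+1) := by positivity
        linarith
    rw [hIioq]
    have htd := tendsto_measure_iUnion_atTop (μ := μ)
      (s := fun n : ℕ => Iic (q - 1/(n+1)))
      (fun m n hmn => Iic_subset_Iic.2 (by
        have h5 : (1:ℝ)/(n+1) ≤ 1/(m+1) := by
          apply one_div_le_one_div_of_le (by positivity)
          exact_mod_cast add_le_add_left (Nat.cast_le.2 hmn) 1
        linarith))
    refine le_of_tendsto htd (Eventually.of_forall fun n => ?_)
    by_contra h'
    push_neg at h'
    have hmem : q - 1/(n+1) ∈ S := h'.le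
    have h7 := csInf_le hSbdd hmem
    have : (0:ℝ) < 1/(n+1) := by positivity
    linarith
  -- decomposition of the integral
  have hdecomp : ∫⁻ x, ν (Prod.mk x ⁻¹' (g ⁻¹' Iic t)) ∂μ
      = (∫⁻ x in Iio q, ν (Prod.mk x ⁻¹' (g ⁻¹' Iic t)) ∂μ)
        + ((∫⁻ x in {q}, ν (Prod.mk x ⁻¹' (g ⁻¹' Iic t)) ∂μ)
          + (∫⁻ x in Ioi q, ν (Prod.mk x ⁻¹' (g ⁻¹' Iic t)) ∂μ)) := by
    rw [← lintegral_add_compl (fun x => ν (Prod.mk x ⁻¹' (g ⁻¹' Iic t)))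
      (measurableSet_Iio (a := q))]
    congr 1
    rw [compl_Iio]
    rw [show Ici q = {q} ∪ Ioi q by
      ext y
      simp only [mem_Ici, mem_union, mem_singleton_iff, mem_Ioi]
      constructor
      · intro h
        rcases eq_or_lt_of_le h with h | h
        exacts [Or.inl h.symm, Or.inr h]
      · rintro (rfl | h)
        exacts [le_rfl, h.le]]
    rw [lintegral_union measurableSet_Ioi (by simp)]
  rw [hdecomp]
  -- piece 1 : on Iio q the slice has full measure
  have hP1 : ∫⁻ x in Iio q, ν (Prod.mk x ⁻¹' (g ⁻¹' Iic t)) ∂μ = μ (Iio q) := by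
    rw [setLIntegral_congr_fun_ae measurableSet_Iio
      (Eventually.of_forall (fun x (hx : x < q) => ?_)), setLIntegral_one]
    have hxS : x ∉ S := fun hmem => absurd (csInf_le hSbdd hmem) (not_le.2 hx)
    have hbx : (μ (Iic x)).toReal < t := by
      have h8 : μ (Iic x) < ENNReal.ofReal t := not_le.1 hxS
      have := ENNReal.toReal_lt_toReal (measure_ne_top μ _) ENNReal.ofReal_ne_top |>.2 h8
      rwa [htoReal] at this
    rw [hslice x]
    apply nu_one
    intro u hu
    simp only [mem_setOf_eq]
    nlinarith [hab x, hu.1, hu.2]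
  -- piece 3 : on Ioi q the slice is a.e. zero
  have hB : μ {x : ℝ | q < x ∧ μ (Iic x) ≤ ENNReal.ofReal t} = 0 := by
    apply null_of_inter_Iic
    intro x hx
    refine measure_mono_null (?_ : _ ⊆ Ioc q x) ?_
    · exact fun y hy => ⟨hy.1.1, hy.2⟩
    · have h1 : μ (Iic x) ≤ μ (Iic q) := hx.2.trans hqF
      have h2 : μ (Iic q) + μ (Ioc q x) = μ (Iic x) := by
        rw [← measure_union (Iic_disjoint_Ioc le_rfl) measurableSet_Ioc,
          Iic_union_Ioc_eq_Iic hx.1.le]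
      have h3 : μ (Iic q) + μ (Ioc q x) ≤ μ (Iic q) + 0 := by
        rw [add_zero, h2]; exact h1
      exact le_antisymm ((ENNReal.add_le_add_iff_left (measure_ne_top μ _)).1 h3) zero_le
  have hP3 : ∫⁻ x in Ioi q, ν (Prod.mk x ⁻¹' (g ⁻¹' Iic t)) ∂μ = 0 := by
    have hae : ∀ᵐ x ∂μ, x ∈ Ioi q → ν (Prod.mk x ⁻¹' (g ⁻¹' Iic t)) = 0 := by
      filter_upwards [measure_eq_zero_iff_ae_notMem.1 hB] with x hxB hxq
      have hxq' : q < x := hxq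
      have hbx : ENNReal.ofReal t < μ (Iic x) := by
        by_contra h'
        exact hxB ⟨hxq', not_lt.1 h'⟩
      have hbxr : t < (μ (Iic x)).toReal := by
        have := ENNReal.toReal_lt_toReal ENNReal.ofReal_ne_top (measure_ne_top μ _) |>.2 hbx
        rwa [htoReal] at this
      have hax : t ≤ (μ (Iio x)).toReal := by
        have h9 : ENNReal.ofReal t ≤ μ (Iio x) :=
          hqF.trans (measure_mono fun y (hy : y ≤ q) => lt_of_le_of_lt hy hxq')
        have := ENNReal.toReal_mono (measure_ne_top μ _) h9
        rwa [htoReal] at this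
      rw [hslice x]
      rcases eq_or_lt_of_le (hab x) with heq | hlt
      · have hempty : {u : ℝ | (μ (Iio x)).toReal
            + u * ((μ (Iic x)).toReal - (μ (Iio x)).toReal) ≤ t} = (∅ : Set ℝ) := by
          ext u
          simp only [mem_setOf_eq, mem_empty_iff_false, iff_false, not_le]
          have hz : u * ((μ (Iic x)).toReal - (μ (Iio x)).toReal) = 0 := by
            rw [← heq]; ring
          rw [hz]
          linarith
        rw [hempty, measure_empty]
      · rw [slice_eq hlt, nu_Iic]
        have hc : (t - (μ (Iio x)).toReal) / ((μ (Iic x)).toReal - (μ (Iio x)).toReal) ≤ 0 :=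
          div_nonpos_of_nonpos_of_nonneg (by linarith) (by linarith)
        rw [min_eq_left (hc.trans zero_le_one)]
        simp [ENNReal.ofReal_eq_zero.2 hc]
    rw [setLIntegral_congr_fun_ae measurableSet_Ioi hae]
    simp
  -- piece 2 : the atom at q
  have haq : (μ (Iio q)).toReal ≤ t := by
    have := ENNReal.toReal_mono ENNReal.ofReal_ne_top hqG
    rwa [htoReal] at this
  have hbq : t ≤ (μ (Iic q)).toReal := by
    have := ENNReal.toReal_mono (measure_ne_top μ _) hqF
    rwa [htoReal] at this
  have hsplitq : μ (Iic q) = μ (Iio q) + μ {q} := by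
    rw [← measure_union (by simp) (measurableSet_singleton q), Iio_union_right]
  have hΔ : (μ (Iic q)).toReal - (μ (Iio q)).toReal = (μ {q}).toReal := by
    rw [hsplitq, ENNReal.toReal_add (measure_ne_top μ _) (measure_ne_top μ _)]
    ring
  have hP2 : ∫⁻ x in {q}, ν (Prod.mk x ⁻¹' (g ⁻¹' Iic t)) ∂μ
      = ENNReal.ofReal (t - (μ (Iio q)).toReal) := by
    rw [lintegral_singleton]
    by_cases hq0 : μ {q} = 0
    · have hΔ0 : (μ (Iic q)).toReal - (μ (Iio q)).toReal = 0 := by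
        rw [hΔ, hq0]; simp
      have : t - (μ (Iio q)).toReal = 0 := by
        have := hbq
        have := haq
        nlinarith [hΔ0]
      rw [hq0, this]
      simp
    · have hΔpos : (0:ℝ) < (μ (Iic q)).toReal - (μ (Iio q)).toReal := by
        rw [hΔ]
        exact ENNReal.toReal_pos hq0 (measure_ne_top μ _)
      have hltq : (μ (Iio q)).toReal < (μ (Iic q)).toReal := by linarith
      rw [hslice q, slice_eq hltq, nu_Iic]
      have hcle : (t - (μ (Iio q)).toReal) / ((μ (Iic q)).toReal - (μ (Iio q)).toReal) ≤ 1 :=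
        (div_le_one hΔpos).2 (by linarith)
      have hc0 : 0 ≤ (t - (μ (Iio q)).toReal) / ((μ (Iic q)).toReal - (μ (Iio q)).toReal) :=
        div_nonneg (by linarith) hΔpos.le
      rw [min_eq_left hcle]
      have hq' : μ {q} = ENNReal.ofReal ((μ (Iic q)).toReal - (μ (Iio q)).toReal) := by
        rw [hΔ, ENNReal.ofReal_toReal (measure_ne_top μ _)]
      rw [hq', ← ENNReal.ofReal_mul hc0, div_mul_cancel₀ _ (ne_of_gt hΔpos)]
  rw [hP1, hP2, hP3, add_zero]
  have hsum : ENNReal.ofReal ((μ (Iio q)).toReal) + ENNReal.ofReal (t - (μ (Iio q)).toReal)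
      = ENNReal.ofReal t := by
    rw [← ENNReal.ofReal_add (ha0 q) (by linarith)]
    congr 1
    ring
  rw [min_eq_left ht1.le, ← hsum, ENNReal.ofReal_toReal (measure_ne_top μ (Iio q))]

/-- Distributional transform: if `X` has cdf `F` and `U ~ Uniform[0,1]` is independent of `X`,
then `Z = F(X⁻) + U (F(X) - F(X⁻))` is uniformly distributed on `[0,1]`. -/
theorem stmt_2 {Ω : Type*} [MeasurableSpace Ω] (ℙ : Measure Ω) [IsProbabilityMeasure ℙ]
    (X U : Ω → ℝ) (hX : Measurable X) (hU : Measurable U)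
    (hUlaw : Measure.map U ℙ = volume.restrict (Set.Icc (0:ℝ) 1))
    (hindep : ProbabilityTheory.IndepFun X U ℙ) :
    Measure.map (fun ω =>
        (Measure.map X ℙ (Set.Iio (X ω))).toReal
          + U ω * ((Measure.map X ℙ (Set.Iic (X ω))).toReal
              - (Measure.map X ℙ (Set.Iio (X ω))).toReal)) ℙ
      = volume.restrict (Set.Icc (0:ℝ) 1) := by
  haveI : IsProbabilityMeasure (Measure.map X ℙ) := Measure.isProbabilityMeasure_map hX.aemeasurable
  have hpair : Measurable fun ω => (X ω, U ω) := hX.prodMk hU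
  have hmap : Measure.map (fun ω => (X ω, U ω)) ℙ
      = (Measure.map X ℙ).prod (Measure.map U ℙ) :=
    (ProbabilityTheory.indepFun_iff_map_prod_eq_prod_map_map hX.aemeasurable hU.aemeasurable).1
      hindep
  have hgm := measurable_g (Measure.map X ℙ)
  calc Measure.map (fun ω =>
        (Measure.map X ℙ (Set.Iio (X ω))).toReal
          + U ω * ((Measure.map X ℙ (Set.Iic (X ω))).toReal
              - (Measure.map X ℙ (Set.Iio (X ω))).toReal)) ℙ
      = Measure.map ((fun p : ℝ × ℝ =>
          (Measure.map X ℙ (Set.Iio p.1)).toReal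
            + p.2 * ((Measure.map X ℙ (Set.Iic p.1)).toReal
              - (Measure.map X ℙ (Set.Iio p.1)).toReal)) ∘ fun ω => (X ω, U ω)) ℙ := rfl
    _ = Measure.map (fun p : ℝ × ℝ =>
          (Measure.map X ℙ (Set.Iio p.1)).toReal
            + p.2 * ((Measure.map X ℙ (Set.Iic p.1)).toReal
              - (Measure.map X ℙ (Set.Iio p.1)).toReal))
          (Measure.map (fun ω => (X ω, U ω)) ℙ) := (Measure.map_map hgm hpair).symm
    _ = volume.restrict (Set.Icc (0:ℝ) 1) := by
        rw [hmap, hUlaw]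
        exact distrib_transform (Measure.map X ℙ)
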